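/- A consumption experiment E = ((x^t, m^t), B^t)_{t=1}^T with differentiable concave budget frontiers μ^t can be rationalized by a CONCAVE quasilinear utility function v(x,m) = u(x) + m (u concave) if and only if the linearized experiment — with budgets given by μ^t_∇(x) = μ^t(x^t) + ∇μ^t(x^t)·(x − x^t) — satisfies cyclical monotonicity: for every index cycle k_1,...,k_n (k_{n+1}=k_1), Σ_j [μ^{k_j}_∇(x^{k_j}) − μ^{k_{j+1}}_∇(x^{k_j})] ≥ 0. -/

import Mathlib

open Filter Topology Set

section Helpers

lemma slope_tendsto {E : Type*} [NormedAddCommGroup E] [NormedSpace ℝ E]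
    (g : E → ℝ) (hg : Differentiable ℝ g) (y d : E) :
    Tendsto (fun ε : ℝ => (g (y + ε • d) - g y) / ε) (𝓝[>] (0:ℝ))
      (𝓝 (fderiv ℝ g y d)) := by
  have h1 : HasDerivAt (fun ε : ℝ => y + ε • d) d 0 := by
    simpa using ((hasDerivAt_id (0:ℝ)).smul_const d).const_add y
  have h2 : HasDerivAt (fun ε : ℝ => g (y + ε • d)) (fderiv ℝ g y d) 0 := by
    have := ((hg (y + (0:ℝ) • d)).hasFDerivAt).comp_hasDerivAt 0 h1
    simpa [Function.comp_def] using this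
  have h3 := hasDerivAt_iff_tendsto_slope.mp h2
  have h4 := h3.mono_left (nhdsWithin_mono 0 (fun x (hx : x ∈ Ioi (0:ℝ)) => ne_of_gt hx))
  refine h4.congr fun ε => ?_
  simp [slope_def_field]

lemma concave_grad_ineq {E : Type*} [NormedAddCommGroup E] [NormedSpace ℝ E]
    {X : Set E} {g : E → ℝ} (hg : Differentiable ℝ g)
    (hc : ConcaveOn ℝ X g) {x y : E} (hx : x ∈ X) (hy : y ∈ X) :
    g x ≤ g y + fderiv ℝ g y (x - y) := by
  have ht := slope_tendsto g hg y (x - y)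
  have hev : ∀ᶠ ε in 𝓝[>] (0:ℝ), g x - g y ≤ (g (y + ε • (x - y)) - g y) / ε := by
    filter_upwards [Ioc_mem_nhdsGT_of_mem (Set.left_mem_Ico.mpr one_pos)] with ε hε
    obtain ⟨hε0, hε1⟩ := hε
    have hcc := hc.2 hy hx (by linarith : (0:ℝ) ≤ 1 - ε) hε0.le (by ring)
    have heq : (1-ε) • y + ε • x = y + ε • (x - y) := by module
    rw [heq] at hcc
    simp only [smul_eq_mul] at hcc
    rw [le_div_iff₀ hε0]
    nlinarith
  have := ge_of_tendsto ht hev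
  linarith

lemma concave_max_grad {E : Type*} [NormedAddCommGroup E] [NormedSpace ℝ E]
    {X : Set E} {u f : E → ℝ}
    (hu : ConcaveOn ℝ X u) (hf : Differentiable ℝ f)
    {y : E} (hy : y ∈ X) (hmax : ∀ z ∈ X, u z + f z ≤ u y + f y)
    {x : E} (hx : x ∈ X) :
    u x - u y ≤ -(fderiv ℝ f y (x - y)) := by
  have ht := (slope_tendsto f hf y (x - y)).neg
  refine ge_of_tendsto ht ?_
  filter_upwards [Ioc_mem_nhdsGT_of_mem (Set.left_mem_Ico.mpr one_pos)] with ε hε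
  obtain ⟨hε0, hε1⟩ := hε
  have heq : (1-ε) • y + ε • x = y + ε • (x - y) := by module
  have hzX : y + ε • (x - y) ∈ X := by
    rw [← heq]
    exact hu.1 hy hx (by linarith) hε0.le (by ring)
  have hcc := hu.2 hy hx (by linarith : (0:ℝ) ≤ 1 - ε) hε0.le (by ring)
  rw [heq] at hcc
  simp only [smul_eq_mul] at hcc
  have hmz := hmax _ hzX
  have key : u x - u y ≤ (f y - f (y + ε • (x - y))) / ε := by
    rw [le_div_iff₀ hε0]; nlinarith
  calc u x - u y ≤ (f y - f (y + ε • (x - y))) / ε := key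
    _ = -((f (y + ε • (x - y)) - f y) / ε) := by ring

lemma affine_concave {E : Type*} [NormedAddCommGroup E] [NormedSpace ℝ E]
    {X : Set E} (hX : Convex ℝ X) (c : ℝ) (p : E →L[ℝ] ℝ) (x0 : E) :
    ConcaveOn ℝ X (fun x => c - p (x - x0)) := by
  refine ⟨hX, fun x hx y hy a b ha hb hab => ?_⟩
  simp only [map_sub, map_add, map_smul, smul_eq_mul]
  have : a * (c - (p x - p x0)) + b * (c - (p y - p x0)) = c - (a * p x + b * p y - p x0) := by
    linear_combination (c + p x0) * hab
  linarith

lemma concaveOn_inf' {E : Type*} [NormedAddCommGroup E] [NormedSpace ℝ E]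
    {X : Set E} {ι : Type*} (s : Finset ι) (hs : s.Nonempty) (f : ι → E → ℝ)
    (h : ∀ i ∈ s, ConcaveOn ℝ X (f i)) :
    ConcaveOn ℝ X (fun x => s.inf' hs (fun i => f i x)) := by
  induction hs using Finset.Nonempty.cons_induction with
  | singleton i => simpa using h i (by simp)
  | cons i s hi hs' ih =>
    simp only [Finset.inf'_cons, hs']
    exact (h i (by simp)).inf (ih (fun j hj => h j (by simp [hj])))

lemma exists_potential {T : ℕ} (hT : 0 < T) (w : Fin T → Fin T → ℝ)
    (hcyc : ∀ (N : ℕ) (k : ℕ → Fin T), 0 < N → k N = k 0 →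
      0 ≤ ∑ j ∈ Finset.range N, w (k j) (k (j+1))) :
    ∃ U : Fin T → ℝ, ∀ s t, U t ≤ U s + w s t := by
  classical
  set b : Fin T := ⟨0, hT⟩ with hb
  set P : Fin T → Set ℝ := fun t =>
    {r | ∃ (N : ℕ) (k : ℕ → Fin T), k 0 = b ∧ k (N+1) = t ∧
      r = ∑ j ∈ Finset.range (N+1), w (k j) (k (j+1))} with hP
  have hne : ∀ t, (P t).Nonempty := by
    intro t
    refine ⟨w b t, 0, fun j => if j = 0 then b else t, by simp, by simp, ?_⟩
    simp [Finset.sum_range_one]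
  have hlb : ∀ t, ∀ r ∈ P t, -(w t b) ≤ r := by
    intro t r hr
    obtain ⟨N, k, hk0, hkN, hrw⟩ := hr
    have h := hcyc (N+2) (fun j => if j ≤ N+1 then k j else b) (by omega) ?_
    · have hsum : ∑ j ∈ Finset.range (N+2),
          w (if j ≤ N+1 then k j else b) (if j+1 ≤ N+1 then k (j+1) else b)
          = r + w t b := by
        rw [Finset.sum_range_succ]
        have h1 : ∑ j ∈ Finset.range (N+1),
            w (if j ≤ N+1 then k j else b) (if j+1 ≤ N+1 then k (j+1) else b)
            = ∑ j ∈ Finset.range (N+1), w (k j) (k (j+1)) := by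
          refine Finset.sum_congr rfl fun j hj => ?_
          have hj' := Finset.mem_range.mp hj
          rw [if_pos (by omega), if_pos (by omega)]
        rw [h1, if_pos (by omega : N+1 ≤ N+1), if_neg (by omega : ¬(N+1+1 ≤ N+1)), hkN, ← hrw]
      have h' : 0 ≤ ∑ j ∈ Finset.range (N+2),
          w (if j ≤ N+1 then k j else b) (if j+1 ≤ N+1 then k (j+1) else b) := h
      linarith [h'.trans_eq hsum]
    · show (if N+2 ≤ N+1 then k (N+2) else b) = (if 0 ≤ N+1 then k 0 else b)
      rw [if_neg (by omega), if_pos (by omega), hk0]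
  have hbdd : ∀ t, BddBelow (P t) := fun t => ⟨-(w t b), fun r hr => hlb t r hr⟩
  refine ⟨fun t => sInf (P t), fun s t => ?_⟩
  have hstep : ∀ r ∈ P s, sInf (P t) ≤ r + w s t := by
    intro r hr
    obtain ⟨N, k, hk0, hkN, hrw⟩ := hr
    refine csInf_le (hbdd t) ?_
    refine ⟨N+1, fun j => if j ≤ N+1 then k j else t, ?_, ?_, ?_⟩
    · show (if 0 ≤ N+1 then k 0 else t) = b
      rw [if_pos (by omega), hk0]
    · show (if N+1+1 ≤ N+1 then k (N+1+1) else t) = t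
      rw [if_neg (by omega)]
    · rw [Finset.sum_range_succ]
      have h1 : ∑ j ∈ Finset.range (N+1),
          w (if j ≤ N+1 then k j else t) (if j+1 ≤ N+1 then k (j+1) else t)
          = ∑ j ∈ Finset.range (N+1), w (k j) (k (j+1)) := by
        refine Finset.sum_congr rfl fun j hj => ?_
        have hj' := Finset.mem_range.mp hj
        rw [if_pos (by omega), if_pos (by omega)]
      have e1 : (fun j => if j ≤ N+1 then k j else t) (N+1) = s := by
        show (if N+1 ≤ N+1 then k (N+1) else t) = s
        rw [if_pos le_rfl, hkN]
      have e2 : (fun j => if j ≤ N+1 then k j else t) (N+1+1) = t := by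
        show (if N+1+1 ≤ N+1 then k (N+1+1) else t) = t
        rw [if_neg (by omega)]
      rw [h1, e1, e2, ← hrw]
  have h2 : sInf (P t) - w s t ≤ sInf (P s) :=
    le_csInf (hne s) (fun r hr => by linarith [hstep r hr])
  linarith

end Helpers

/-- Remark 1: an experiment with differentiable concave budget frontiers is rationalized by a
concave quasilinear utility iff the linearized experiment satisfies cyclical monotonicity. -/
theorem concave_ql_iff_linearized_cyclical_monotonicity {n T : ℕ} (hT : 0 < T)
    (X : Set (Fin n → ℝ)) (hXconv : Convex ℝ X)
    (xs : Fin T → (Fin n → ℝ)) (hxX : ∀ t, xs t ∈ X)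
    (μ : Fin T → (Fin n → ℝ) → ℝ)
    (hdiff : ∀ t, Differentiable ℝ (μ t))
    (hconc : ∀ t, ConcaveOn ℝ X (μ t))
    (hdecr : ∀ t, ∀ x ∈ X, ∀ y ∈ X, x ≤ y → μ t y ≤ μ t x) :
    (∃ u : (Fin n → ℝ) → ℝ, ConcaveOn ℝ X u ∧
      ∀ t, ∀ x ∈ X, ∀ m : ℝ, m ≤ μ t x → u x + m ≤ u (xs t) + μ t (xs t)) ↔
    (∀ (N : ℕ) (k : ℕ → Fin T), 0 < N → k N = k 0 →
      0 ≤ ∑ j ∈ Finset.range N,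
        (μ (k j) (xs (k j)) -
          (μ (k (j + 1)) (xs (k (j + 1))) +
            fderiv ℝ (μ (k (j + 1))) (xs (k (j + 1)))
              (xs (k j) - xs (k (j + 1)))))) := by
  haveI : Nonempty (Fin T) := ⟨⟨0, hT⟩⟩
  constructor
  · rintro ⟨u, huc, hur⟩ N k hN hk
    have key : ∀ (t : Fin T), ∀ x ∈ X,
        u x - u (xs t) ≤ -(fderiv ℝ (μ t) (xs t) (x - xs t)) := fun t x hx =>
      concave_max_grad huc (hdiff t) (hxX t) (fun z hz => hur t z hz (μ t z) le_rfl) hx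
    have hsum : ∑ j ∈ Finset.range N,
        ((u (xs (k j)) + μ (k j) (xs (k j))) - (u (xs (k (j+1))) + μ (k (j+1)) (xs (k (j+1)))))
        ≤ ∑ j ∈ Finset.range N, (μ (k j) (xs (k j)) -
          (μ (k (j+1)) (xs (k (j+1))) +
            fderiv ℝ (μ (k (j+1))) (xs (k (j+1))) (xs (k j) - xs (k (j+1))))) := by
      refine Finset.sum_le_sum fun j _ => ?_
      have := key (k (j+1)) (xs (k j)) (hxX (k j))
      linarith
    rw [Finset.sum_range_sub' (fun j => u (xs (k j)) + μ (k j) (xs (k j)))] at hsum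
    rw [hk] at hsum
    simpa using hsum
  · intro hcm
    have hcyc : ∀ (N : ℕ) (k : ℕ → Fin T), 0 < N → k N = k 0 →
        0 ≤ ∑ j ∈ Finset.range N,
          (μ (k (j+1)) (xs (k (j+1))) - μ (k j) (xs (k j)) -
            fderiv ℝ (μ (k j)) (xs (k j)) (xs (k (j+1)) - xs (k j))) := by
      intro N k hN hk
      have h := hcm N (fun j => k (N - j)) hN (by simp [hk])
      have h' : 0 ≤ ∑ j ∈ Finset.range N,
          (μ (k (N - j)) (xs (k (N - j))) -
            (μ (k (N - (j+1))) (xs (k (N - (j+1)))) +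
              fderiv ℝ (μ (k (N - (j+1)))) (xs (k (N - (j+1))))
                (xs (k (N - j)) - xs (k (N - (j+1)))))) := h
      refine le_trans h' (le_of_eq ?_)
      conv_rhs => rw [← Finset.sum_range_reflect]
      refine Finset.sum_congr rfl fun j hj => ?_
      have hj' := Finset.mem_range.mp hj
      have e1 : N - (j+1) = N - 1 - j := by omega
      have e2 : N - j = (N - 1 - j) + 1 := by omega
      rw [e1, e2]
      ring
    obtain ⟨U, hU⟩ := exists_potential hT
      (fun s t => μ t (xs t) - μ s (xs s) - fderiv ℝ (μ s) (xs s) (xs t - xs s)) hcyc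
    refine ⟨fun x => Finset.univ.inf' Finset.univ_nonempty
        (fun s => (U s - μ s (xs s)) - fderiv ℝ (μ s) (xs s) (x - xs s)),
      concaveOn_inf' _ _ _ (fun s _ => affine_concave hXconv _ _ _), ?_⟩
    intro t x hx m hm
    have hut : Finset.univ.inf' Finset.univ_nonempty
        (fun s => (U s - μ s (xs s)) - fderiv ℝ (μ s) (xs s) (xs t - xs s))
        = U t - μ t (xs t) := by
      apply le_antisymm
      · simpa only [sub_self, map_zero, sub_zero] using Finset.inf'_le
          (fun s => (U s - μ s (xs s)) - fderiv ℝ (μ s) (xs s) (xs t - xs s))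
          (Finset.mem_univ t)
      · refine Finset.le_inf' _ _ fun s _ => ?_
        have h := hU s t
        linarith
    have h1 : Finset.univ.inf' Finset.univ_nonempty
        (fun s => (U s - μ s (xs s)) - fderiv ℝ (μ s) (xs s) (x - xs s))
        ≤ (U t - μ t (xs t)) - fderiv ℝ (μ t) (xs t) (x - xs t) := by
      exact Finset.inf'_le
        (fun s => (U s - μ s (xs s)) - fderiv ℝ (μ s) (xs s) (x - xs s))
        (Finset.mem_univ t)
    have h2 := concave_grad_ineq (hdiff t) (hconc t) hx (hxX t)
    simp only []
    rw [hut]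
    linarith
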